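/- For all μ > 0, the integral over X from 0 to ∞ of e^{−μX} · (e^{−X}/(2√π)) · (−2√X((X−10)X−2) + e^X √π X(X(2X−5)+6)(1 − erf(√X))) equals M(μ) = (1/μ⁴)·(3μ² − 5μ + 6 + (4μ⁵ + 16μ⁴ − 7μ² − 40μ − 24)/(4(1+μ)^{5/2})). -/

import Mathlib

open Real MeasureTheory Filter Set Asymptotics Topology

/-- The Gauss error function. -/
noncomputable def erf (t : ℝ) : ℝ := (2 / Real.sqrt π) * ∫ s in (0 : ℝ)..t, Real.exp (-s ^ 2)

lemma sqrt_pi_ne : Real.sqrt π ≠ 0 := (Real.sqrt_pos.2 Real.pi_pos).ne'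

lemma hasDerivAt_erf (t : ℝ) : HasDerivAt erf (2 / Real.sqrt π * Real.exp (-t ^ 2)) t := by
  have hc : Continuous fun s : ℝ => Real.exp (-s ^ 2) := by fun_prop
  have h : HasDerivAt (fun u : ℝ => ∫ s in (0:ℝ)..u, Real.exp (-s ^ 2)) (Real.exp (-t ^ 2)) t :=
    intervalIntegral.integral_hasDerivAt_right (hc.intervalIntegrable _ _)
      (hc.stronglyMeasurableAtFilter _ _) hc.continuousAt
  exact h.const_mul (2 / Real.sqrt π)

@[fun_prop]
lemma continuous_erf : Continuous erf :=
  continuous_iff_continuousAt.2 fun t => (hasDerivAt_erf t).continuousAt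

lemma erf_zero : erf 0 = 0 := by simp [erf]

lemma gauss_integrableOn : IntegrableOn (fun s : ℝ => Real.exp (-s ^ 2)) (Ioi 0) := by
  have := (integrable_exp_neg_mul_sq (b := 1) one_pos).integrableOn (s := Ioi 0)
  simpa using this

lemma gauss_integral : ∫ s in Ioi (0:ℝ), Real.exp (-s ^ 2) = Real.sqrt π / 2 := by
  simpa using integral_gaussian_Ioi 1

lemma erf_nonneg {t : ℝ} (ht : 0 ≤ t) : 0 ≤ erf t := by
  have : 0 ≤ ∫ s in (0:ℝ)..t, Real.exp (-s ^ 2) :=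
    intervalIntegral.integral_nonneg ht fun s _ => (Real.exp_pos _).le
  have h2 : 0 ≤ 2 / Real.sqrt π := by positivity
  exact mul_nonneg h2 this

lemma erf_le_one {t : ℝ} (ht : 0 ≤ t) : erf t ≤ 1 := by
  have h1 : ∫ s in (0:ℝ)..t, Real.exp (-s ^ 2) ≤ Real.sqrt π / 2 := by
    rw [intervalIntegral.integral_of_le ht, ← gauss_integral]
    apply setIntegral_mono_set gauss_integrableOn
    · filter_upwards with x using (Real.exp_pos _).le
    · exact (Ioc_subset_Ioi_self).eventuallyLE
  have hsp : 0 < Real.sqrt π := Real.sqrt_pos.2 Real.pi_pos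
  rw [erf]
  calc 2 / Real.sqrt π * ∫ s in (0:ℝ)..t, Real.exp (-s ^ 2)
      ≤ 2 / Real.sqrt π * (Real.sqrt π / 2) := by
        apply mul_le_mul_of_nonneg_left h1 (by positivity)
    _ = 1 := by field_simp
  
lemma tendsto_erf_atTop : Tendsto erf atTop (𝓝 1) := by
  have h := intervalIntegral_tendsto_integral_Ioi 0 gauss_integrableOn tendsto_id
  have h2 := h.const_mul (2 / Real.sqrt π)
  rw [gauss_integral] at h2
  have : 2 / Real.sqrt π * (Real.sqrt π / 2) = 1 := by field_simp
  rw [this] at h2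
  exact h2.congr fun t => rfl

lemma tendsto_sqrt_atTop : Tendsto Real.sqrt atTop atTop := by
  apply (tendsto_rpow_atTop (y := (1:ℝ)/2) (by norm_num)).congr'
  filter_upwards [eventually_ge_atTop (0:ℝ)] with x hx
  rw [Real.sqrt_eq_rpow]

lemma tendsto_mpow (k : ℕ) {b : ℝ} (hb : 0 < b) :
    Tendsto (fun X : ℝ => X ^ k * Real.exp (-(b * X))) atTop (𝓝 0) := by
  apply (tendsto_rpow_mul_exp_neg_mul_atTop_nhds_zero k b hb).congr'
  filter_upwards [eventually_gt_atTop (0:ℝ)] with X hX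
  rw [Real.rpow_natCast, neg_mul]

lemma tendsto_msq (k : ℕ) {b : ℝ} (hb : 0 < b) :
    Tendsto (fun X : ℝ => X ^ k * Real.sqrt X * Real.exp (-(b * X))) atTop (𝓝 0) := by
  apply (tendsto_rpow_mul_exp_neg_mul_atTop_nhds_zero (k + 1/2) b hb).congr'
  filter_upwards [eventually_gt_atTop (0:ℝ)] with X hX
  rw [Real.rpow_add hX, Real.rpow_natCast, ← Real.sqrt_eq_rpow, neg_mul]

lemma hasDerivAt_Fgen (c2 c1 c0 d3 d2 d1 d0 T p q r : ℝ) {X : ℝ} (hX : 0 < X) :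
    HasDerivAt (fun Y : ℝ =>
      Real.exp (-(q*Y)) * (Real.sqrt Y * (c2*Y^2 + c1*Y + c0))
      + Real.exp (-(p*Y)) * ((d3*Y^3 + d2*Y^2 + d1*Y + d0) * (1 - erf (Real.sqrt Y)))
      + T * erf (r * Real.sqrt Y))
    ( -q * Real.exp (-(q*X)) * (Real.sqrt X * (c2*X^2 + c1*X + c0))
      + Real.exp (-(q*X)) * ((1/(2*Real.sqrt X)) * (c2*X^2 + c1*X + c0) + Real.sqrt X * (2*c2*X + c1))
      + (-p * Real.exp (-(p*X)) * ((d3*X^3 + d2*X^2 + d1*X + d0) * (1 - erf (Real.sqrt X)))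
        + Real.exp (-(p*X)) * ((3*d3*X^2 + 2*d2*X + d1) * (1 - erf (Real.sqrt X))
          - (d3*X^3 + d2*X^2 + d1*X + d0) * (2 / Real.sqrt π * Real.exp (-X) * (1/(2*Real.sqrt X)))))
      + T * (2 / Real.sqrt π * Real.exp (-(r^2*X)) * (r * (1/(2*Real.sqrt X))))) X := by
  have hsqrt : HasDerivAt Real.sqrt (1/(2*Real.sqrt X)) X := Real.hasDerivAt_sqrt hX.ne'
  have herf : HasDerivAt (fun Y : ℝ => erf (Real.sqrt Y))
      (2 / Real.sqrt π * Real.exp (-X) * (1/(2*Real.sqrt X))) X := by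
    have h := (hasDerivAt_erf (Real.sqrt X)).comp X hsqrt
    rw [Real.sq_sqrt hX.le] at h
    exact h
  have herfr : HasDerivAt (fun Y : ℝ => erf (r * Real.sqrt Y))
      (2 / Real.sqrt π * Real.exp (-(r^2*X)) * (r * (1/(2*Real.sqrt X)))) X := by
    have h := (hasDerivAt_erf (r * Real.sqrt X)).comp X (hsqrt.const_mul r)
    rw [mul_pow, Real.sq_sqrt hX.le] at h
    exact h
  have hexpq : HasDerivAt (fun Y : ℝ => Real.exp (-(q*Y))) (Real.exp (-(q*X)) * (-(q*1))) X :=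
    (((hasDerivAt_id X).const_mul q).neg).exp
  have hexpp : HasDerivAt (fun Y : ℝ => Real.exp (-(p*Y))) (Real.exp (-(p*X)) * (-(p*1))) X :=
    (((hasDerivAt_id X).const_mul p).neg).exp
  have hpoly2 : HasDerivAt (fun Y : ℝ => c2*Y^2 + c1*Y + c0) (c2 * (2*X^1) + c1*1) X := by
    exact (((hasDerivAt_pow 2 X).const_mul c2).add ((hasDerivAt_id X).const_mul c1)).add_const c0
  have hpoly3 : HasDerivAt (fun Y : ℝ => d3*Y^3 + d2*Y^2 + d1*Y + d0)
      (d3 * (3*X^2) + d2 * (2*X^1) + d1*1) X := by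
    exact ((((hasDerivAt_pow 3 X).const_mul d3).add ((hasDerivAt_pow 2 X).const_mul d2)).add
      ((hasDerivAt_id X).const_mul d1)).add_const d0
  have H := ((hexpq.mul (hsqrt.mul hpoly2)).add
      (hexpp.mul (hpoly3.mul (herf.const_sub 1)))).add (herfr.const_mul T)
  refine H.congr_deriv (Eq.symm ?_)
  simp only [Pi.mul_apply]
  ring

/-- The inverse Laplace transform `M̌(X)` of `M(μ)`. -/
noncomputable def Mcheck (X : ℝ) : ℝ :=
  (Real.exp (-X) / (2 * Real.sqrt π)) *
    (-2 * Real.sqrt X * ((X - 10) * X - 2) +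
      Real.exp X * Real.sqrt π * X * (X * (2 * X - 5) + 6) * (1 - erf (Real.sqrt X)))

/-- The function `M(μ)`. -/
noncomputable def Mfun (μ : ℝ) : ℝ :=
  (1 / μ ^ 4) *
    (3 * μ ^ 2 - 5 * μ + 6 +
      (4 * μ ^ 5 + 16 * μ ^ 4 - 7 * μ ^ 2 - 40 * μ - 24) / (4 * (1 + μ) ^ ((5 : ℝ) / 2)))

noncomputable def Faux (μ : ℝ) : ℝ → ℝ := fun Y =>
  Real.exp (-((1+μ)*Y)) * (Real.sqrt Y * ((1/(Real.sqrt π*μ))*Y^2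
      + ((3-10*μ^2)/(Real.sqrt π*(μ^2*(1+μ))))*Y
      + (12+11*μ-4*μ^2-28*μ^3-4*μ^4)/(2*Real.sqrt π*(μ^3*(1+μ)^2))))
  + Real.exp (-(μ*Y)) * (((-1/μ)*Y^3 + ((5*μ-6)/(2*μ^2))*Y^2 + ((-3*μ^2+5*μ-6)/μ^3)*Y
      + (-3*μ^2+5*μ-6)/μ^4) * (1 - erf (Real.sqrt Y)))
  + ((4*μ^5+16*μ^4-7*μ^2-40*μ-24)/(4*(μ^4*(1+μ)^2*Real.sqrt (1+μ))))
      * erf (Real.sqrt (1+μ) * Real.sqrt Y)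

lemma hasDerivAt_Faux {μ X : ℝ} (hμ : 0 < μ) (hX : 0 < X) :
    HasDerivAt (Faux μ) (Real.exp (-μ * X) * Mcheck X) X := by
  have ha : (0:ℝ) < 1+μ := by linarith
  have h := hasDerivAt_Fgen (1/(Real.sqrt π*μ)) ((3-10*μ^2)/(Real.sqrt π*(μ^2*(1+μ))))
    ((12+11*μ-4*μ^2-28*μ^3-4*μ^4)/(2*Real.sqrt π*(μ^3*(1+μ)^2)))
    (-1/μ) ((5*μ-6)/(2*μ^2)) ((-3*μ^2+5*μ-6)/μ^3) ((-3*μ^2+5*μ-6)/μ^4)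
    ((4*μ^5+16*μ^4-7*μ^2-40*μ-24)/(4*(μ^4*(1+μ)^2*Real.sqrt (1+μ))))
    μ (1+μ) (Real.sqrt (1+μ)) hX
  rw [Real.sq_sqrt ha.le] at h
  have hsplit : Real.exp (-((1+μ)*X)) = Real.exp (-X) * Real.exp (-(μ*X)) := by
    rw [← Real.exp_add]; congr 1; ring
  refine h.congr_deriv (Eq.symm ?_)
  simp only [Mcheck]
  rw [show -μ*X = -(μ*X) from by ring]
  rw [hsplit, Real.exp_neg X]
  set u := Real.sqrt X with hu
  have hu2 : u^2 = X := by rw [hu]; exact Real.sq_sqrt hX.le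
  set sa := Real.sqrt (1+μ) with hsa
  have hsa2 : sa^2 = 1+μ := by rw [hsa]; exact Real.sq_sqrt ha.le
  rw [← hu2]
  have h1 : u ≠ 0 := by rw [hu]; exact (Real.sqrt_pos.2 hX).ne'
  have h3 : sa ≠ 0 := by rw [hsa]; exact (Real.sqrt_pos.2 ha).ne'
  have h4 : μ ≠ 0 := hμ.ne'
  field_simp
  ring

lemma continuous_Mcheck : Continuous Mcheck := by unfold Mcheck; fun_prop

lemma continuous_Faux (μ : ℝ) : Continuous (Faux μ) := by unfold Faux; fun_prop

lemma Faux_zero (μ : ℝ) : Faux μ 0 = (-3*μ^2+5*μ-6)/μ^4 := by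
  simp [Faux, erf_zero, Real.sqrt_zero]

lemma Mcheck_eq (X : ℝ) : Mcheck X = -(Real.exp (-X) / Real.sqrt π) * (Real.sqrt X * ((X-10)*X-2))
    + X*(X*(2*X-5)+6)*(1 - erf (Real.sqrt X))/2 := by
  simp only [Mcheck]
  rw [Real.exp_neg]
  have h2 := Real.exp_ne_zero X
  field_simp

lemma tendsto_one_sub_erf : Tendsto (fun Y : ℝ => 1 - erf (Real.sqrt Y)) atTop (𝓝 0) := by
  have h := tendsto_erf_atTop.comp _root_.tendsto_sqrt_atTop
  have h2 := tendsto_const_nhds (α := ℝ) (x := (1:ℝ)) (f := atTop) |>.sub h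
  simpa using h2

lemma tendsto_Faux (μ : ℝ) (hμ : 0 < μ) : Tendsto (Faux μ) atTop
    (𝓝 ((4*μ^5+16*μ^4-7*μ^2-40*μ-24)/(4*(μ^4*(1+μ)^2*Real.sqrt (1+μ))))) := by
  have ha : (0:ℝ) < 1+μ := by linarith
  have h1 : Tendsto (fun Y : ℝ => Real.exp (-((1+μ)*Y)) * (Real.sqrt Y * ((1/(Real.sqrt π*μ))*Y^2
      + ((3-10*μ^2)/(Real.sqrt π*(μ^2*(1+μ))))*Y
      + (12+11*μ-4*μ^2-28*μ^3-4*μ^4)/(2*Real.sqrt π*(μ^3*(1+μ)^2))))) atTop (𝓝 0) := by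
    have h := ((tendsto_msq 2 ha).const_mul (1/(Real.sqrt π*μ))).add
      (((tendsto_msq 1 ha).const_mul ((3-10*μ^2)/(Real.sqrt π*(μ^2*(1+μ))))).add
        ((tendsto_msq 0 ha).const_mul
          ((12+11*μ-4*μ^2-28*μ^3-4*μ^4)/(2*Real.sqrt π*(μ^3*(1+μ)^2)))))
    simpa using h.congr fun Y => by ring
  have hpolyexp : Tendsto (fun Y : ℝ => ((-1/μ)*Y^3 + ((5*μ-6)/(2*μ^2))*Y^2
      + ((-3*μ^2+5*μ-6)/μ^3)*Y + (-3*μ^2+5*μ-6)/μ^4) * Real.exp (-(μ*Y))) atTop (𝓝 0) := by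
    have h := (((tendsto_mpow 3 hμ).const_mul (-1/μ)).add
      (((tendsto_mpow 2 hμ).const_mul ((5*μ-6)/(2*μ^2))).add
        (((tendsto_mpow 1 hμ).const_mul ((-3*μ^2+5*μ-6)/μ^3)).add
          ((tendsto_mpow 0 hμ).const_mul ((-3*μ^2+5*μ-6)/μ^4)))))
    simpa using h.congr fun Y => by ring
  have h2 : Tendsto (fun Y : ℝ => Real.exp (-(μ*Y)) * (((-1/μ)*Y^3 + ((5*μ-6)/(2*μ^2))*Y^2
      + ((-3*μ^2+5*μ-6)/μ^3)*Y + (-3*μ^2+5*μ-6)/μ^4) * (1 - erf (Real.sqrt Y)))) atTop (𝓝 0) := by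
    have h := hpolyexp.mul tendsto_one_sub_erf
    simpa using h.congr fun Y => by ring
  have hin : Tendsto (fun Y : ℝ => Real.sqrt (1+μ) * Real.sqrt Y) atTop atTop :=
    _root_.tendsto_sqrt_atTop.const_mul_atTop (Real.sqrt_pos.2 ha)
  have h3 : Tendsto (fun Y : ℝ => ((4*μ^5+16*μ^4-7*μ^2-40*μ-24)/(4*(μ^4*(1+μ)^2*Real.sqrt (1+μ))))
      * erf (Real.sqrt (1+μ) * Real.sqrt Y)) atTop
      (𝓝 ((4*μ^5+16*μ^4-7*μ^2-40*μ-24)/(4*(μ^4*(1+μ)^2*Real.sqrt (1+μ))) * 1)) :=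
    (tendsto_erf_atTop.comp hin).const_mul _
  have H := (h1.add h2).add h3
  rw [show ((0:ℝ) + 0 + (4*μ^5+16*μ^4-7*μ^2-40*μ-24)/(4*(μ^4*(1+μ)^2*Real.sqrt (1+μ))) * 1)
    = (4*μ^5+16*μ^4-7*μ^2-40*μ-24)/(4*(μ^4*(1+μ)^2*Real.sqrt (1+μ))) by ring] at H
  exact H

lemma integrableOn_integrand (μ : ℝ) (hμ : 0 < μ) :
    IntegrableOn (fun X : ℝ => Real.exp (-μ * X) * Mcheck X) (Ioi 0) := by
  apply integrable_of_isBigO_exp_neg (half_pos hμ)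
  · exact (Continuous.mul (by fun_prop) continuous_Mcheck).continuousOn
  · have hne : ∀ᶠ x : ℝ in atTop, Real.exp (-(μ/2) * x) = 0 →
        Real.exp (-μ * x) * Mcheck x = 0 :=
      Eventually.of_forall fun x hx => absurd hx (Real.exp_ne_zero _)
    refine ((isLittleO_iff_tendsto' hne).2 ?_).isBigO
    have hb : (0:ℝ) < 1 + μ/2 := by linarith
    have h1 := ((tendsto_msq 2 hb).const_mul (-(1/Real.sqrt π))).add
      (((tendsto_msq 1 hb).const_mul (10/Real.sqrt π)).add
        ((tendsto_msq 0 hb).const_mul (2/Real.sqrt π)))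
    have hpoly := (((tendsto_mpow 3 (half_pos hμ)).const_mul (2:ℝ)).add
      (((tendsto_mpow 2 (half_pos hμ)).const_mul (-5:ℝ)).add
        ((tendsto_mpow 1 (half_pos hμ)).const_mul (6:ℝ))))
    have h2 := (hpoly.mul tendsto_one_sub_erf).const_mul (1/2 : ℝ)
    have H := h1.add h2
    rw [show ((-(1/Real.sqrt π))*0 + (10/Real.sqrt π*0 + 2/Real.sqrt π*0)
      + 1/2*((2*0 + (-5*0 + 6*0))*0) : ℝ) = 0 by ring] at H
    apply H.congr'
    filter_upwards [eventually_gt_atTop (0:ℝ)] with X hX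
    have e1 : Real.exp (-μ*X) = Real.exp (-(μ/2)*X) * Real.exp (-(μ/2)*X) := by
      rw [← Real.exp_add]; congr 1; ring
    have e2 : Real.exp (-((1+μ/2)*X)) = Real.exp (-(μ/2)*X) * Real.exp (-X) := by
      rw [← Real.exp_add]; congr 1; ring
    rw [Mcheck_eq, e1, e2]
    have := Real.exp_ne_zero (-(μ/2)*X)
    set sp := Real.sqrt π with hsp
    have hsp0 : sp ≠ 0 := by rw [hsp]; exact sqrt_pi_ne
    field_simp
    ring

theorem laplace_transform_of_Mcheck (μ : ℝ) (hμ : 0 < μ) :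
    ∫ X in Set.Ioi (0 : ℝ), Real.exp (-μ * X) * Mcheck X = Mfun μ := by
  have ha : (0:ℝ) < 1 + μ := by linarith
  rw [MeasureTheory.integral_Ioi_of_hasDerivAt_of_tendsto
      ((continuous_Faux μ).continuousWithinAt)
      (fun x hx => hasDerivAt_Faux hμ hx)
      (integrableOn_integrand μ hμ) (tendsto_Faux μ hμ)]
  rw [Faux_zero]
  simp only [Mfun]
  have h5 : (1+μ) ^ ((5:ℝ)/2) = (1+μ)^2 * Real.sqrt (1+μ) := by
    rw [show ((5:ℝ)/2) = ((2:ℕ):ℝ) + (1/2:ℝ) by norm_num, Real.rpow_add ha,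
      Real.rpow_natCast, ← Real.sqrt_eq_rpow]
  rw [h5]
  have hsa : Real.sqrt (1+μ) ≠ 0 := (Real.sqrt_pos.2 ha).ne'
  have hμ0 : μ ≠ 0 := hμ.ne'
  have ha0 : (1+μ) ≠ 0 := ha.ne'
  field_simp
  ring
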